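/- Let N ≥ 1 be an integer, σ, γ ∈ (−1,0), and p, q > 1 with p > max{σ/γ, 1} and q > max{γ/σ, 1}. Assume N/2 ≥ max{ ((σ+1)(pq−1)+p+1)/(pq−1), ((γ+1)(pq−1)+q+1)/(pq−1) }. Then there exist real numbers q₁, q₂ > 0 such that: max{1/(q d₂), 1/k₁ − 2/N} < 1/q₁ < min{1/d₁, 1/q}; max{1/(p d₁), 1/k₂ − 2/N} < 1/q₂ < min{1/d₂, 1/p}; p/q₂ − 1/q₁ < 2/N; and q/q₁ − 1/q₂ < 2/N. -/

import Mathlib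

set_option maxHeartbeats 1000000 in
/-- Lemma 4.3: under the global-existence conditions there exist auxiliary exponents
`q₁, q₂ > 0` satisfying the required system of strict inequalities, where
`d₁ = N(pq-1)/(2(p+1))`, `d₂ = N(pq-1)/(2(q+1))`,
`k₁ = N(pq-1)/(2[(pq-1)(1+σ)+p+1])`, `k₂ = N(pq-1)/(2[(pq-1)(1+γ)+q+1])`. -/
theorem auxiliary_exponents_exist (N : ℕ) (hN : 1 ≤ N) (p q σ γ : ℝ)
    (hp : max (σ / γ) 1 < p) (hq : max (γ / σ) 1 < q)
    (hσ : σ ∈ Set.Ioo (-1:ℝ) 0) (hγ : γ ∈ Set.Ioo (-1:ℝ) 0)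
    (hcrit : max (((σ + 1) * (p * q - 1) + p + 1) / (p * q - 1))
      (((γ + 1) * (p * q - 1) + q + 1) / (p * q - 1)) ≤ (N : ℝ) / 2) :
    ∃ q₁ q₂ : ℝ, 0 < q₁ ∧ 0 < q₂ ∧
      (max (1 / (q * ((N : ℝ) * (p * q - 1) / (2 * (q + 1)))))
          (1 / ((N : ℝ) * (p * q - 1) / (2 * ((p * q - 1) * (1 + σ) + p + 1))) - 2 / (N : ℝ))
        < 1 / q₁ ∧
        1 / q₁ < min (1 / ((N : ℝ) * (p * q - 1) / (2 * (p + 1)))) (1 / q)) ∧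
      (max (1 / (p * ((N : ℝ) * (p * q - 1) / (2 * (p + 1)))))
          (1 / ((N : ℝ) * (p * q - 1) / (2 * ((p * q - 1) * (1 + γ) + q + 1))) - 2 / (N : ℝ))
        < 1 / q₂ ∧
        1 / q₂ < min (1 / ((N : ℝ) * (p * q - 1) / (2 * (q + 1)))) (1 / p)) ∧
      p / q₂ - 1 / q₁ < 2 / (N : ℝ) ∧
      q / q₁ - 1 / q₂ < 2 / (N : ℝ) := by
  obtain ⟨hσ1, hσ0⟩ := hσ
  obtain ⟨hγ1, hγ0⟩ := hγ
  have hp1 : 1 < p := lt_of_le_of_lt (le_max_right _ _) hp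
  have hq1 : 1 < q := lt_of_le_of_lt (le_max_right _ _) hq
  have hp0 : (0:ℝ) < p := by linarith
  have hq0 : (0:ℝ) < q := by linarith
  have hpγ : p * γ < σ := (div_lt_iff_of_neg hγ0).mp (lt_of_le_of_lt (le_max_left _ _) hp)
  have hqσ : q * σ < γ := (div_lt_iff_of_neg hσ0).mp (lt_of_le_of_lt (le_max_left _ _) hq)
  set n : ℝ := (N:ℝ) with hndef
  have hn : (0:ℝ) < n := by
    rw [hndef]
    exact_mod_cast Nat.pos_of_ne_zero (by omega)
  have hA : (0:ℝ) < p * q - 1 := by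
    have := mul_pos (show (0:ℝ) < p - 1 by linarith) (show (0:ℝ) < q - 1 by linarith)
    nlinarith
  have hnA : 0 < n * (p*q-1) := mul_pos hn hA
  have hnne : n ≠ 0 := ne_of_gt hn
  have hAne : p*q-1 ≠ 0 := ne_of_gt hA
  have hpne : p ≠ 0 := ne_of_gt hp0
  have hqne : q ≠ 0 := ne_of_gt hq0
  have h1 : 2*((σ+1)*(p*q-1)) + 2*(p+1) ≤ n*(p*q-1) := by
    have h := (max_le_iff.mp hcrit).1
    rw [div_le_div_iff₀ hA (by norm_num : (0:ℝ) < 2)] at h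
    linarith
  have h2 : 2*((γ+1)*(p*q-1)) + 2*(q+1) ≤ n*(p*q-1) := by
    have h := (max_le_iff.mp hcrit).2
    rw [div_le_div_iff₀ hA (by norm_num : (0:ℝ) < 2)] at h
    linarith
  set D := n*(p*q-1)*p*q with hDdef
  have hD : 0 < D := by rw [hDdef]; positivity
  set a1 := max 0 (2*(p+1)*p*q - n*(p*q-1)*p) with ha1
  set b1 := min (-(2*σ*(p*q-1)*p*q)) (2*(p+1)*p*q - 2*(q+1)*p) with hb1
  set a2 := max 0 (2*(q+1)*p*q - n*(p*q-1)*q) with ha2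
  set b2 := min (-(2*γ*(p*q-1)*p*q)) (2*(q+1)*p*q - 2*(p+1)*q) with hb2
  clear_value a1 b1 a2 b2
  have hb1c1 : (0:ℝ) < -(2*σ*(p*q-1)*p*q) := by
    have := mul_pos (mul_pos (mul_pos (show (0:ℝ) < -σ by linarith) hA) hp0) hq0
    linarith
  have hb1c2 : (0:ℝ) < 2*(p+1)*p*q - 2*(q+1)*p := by
    have := mul_pos hp0 hA
    linarith
  have hb1pos : 0 < b1 := by rw [hb1]; exact lt_min hb1c1 hb1c2
  have hb2c1 : (0:ℝ) < -(2*γ*(p*q-1)*p*q) := by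
    have := mul_pos (mul_pos (mul_pos (show (0:ℝ) < -γ by linarith) hA) hp0) hq0
    linarith
  have hb2c2 : (0:ℝ) < 2*(q+1)*p*q - 2*(p+1)*q := by
    have := mul_pos hq0 hA
    linarith
  have hb2pos : 0 < b2 := by rw [hb2]; exact lt_min hb2c1 hb2c2
  have hK1 : 2*q*(p+1) + 2*σ*q*(p*q-1) < n*(p*q-1) := by
    linarith [mul_lt_mul_of_pos_right hqσ hA]
  have hK2 : 2*p*(q+1) + 2*γ*p*(p*q-1) < n*(p*q-1) := by
    linarith [mul_lt_mul_of_pos_right hpγ hA]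
  have hnA2q : 2*(q+1) < n*(p*q-1) := by
    linarith [mul_pos (show (0:ℝ) < γ+1 by linarith) hA]
  have hnA2p : 2*(p+1) < n*(p*q-1) := by
    linarith [mul_pos (show (0:ℝ) < σ+1 by linarith) hA]
  have hL1 : 2*q*(p+2-p*q) < n*(p*q-1) := by
    linarith [mul_pos (show (0:ℝ) < q-1 by linarith) hA, hnA2q]
  have hL2 : 2*p*(q+2-p*q) < n*(p*q-1) := by
    linarith [mul_pos (show (0:ℝ) < p-1 by linarith) hA, hnA2p]
  -- a1 < b1
  have ha1b1 : a1 < b1 := by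
    rw [ha1, hb1]
    refine max_lt (lt_min hb1c1 hb1c2) (lt_min ?_ ?_)
    · linarith [mul_lt_mul_of_pos_left hK1 hp0]
    · linarith [mul_lt_mul_of_pos_right hnA2q hp0]
  have ha2b2 : a2 < b2 := by
    rw [ha2, hb2]
    refine max_lt (lt_min hb2c1 hb2c2) (lt_min ?_ ?_)
    · linarith [mul_lt_mul_of_pos_left hK2 hq0]
    · linarith [mul_lt_mul_of_pos_right hnA2p hq0]
  -- a1 < p * b2
  have ha1pb2 : a1 < p * b2 := by
    rw [ha1, hb2, mul_min_of_nonneg _ _ (le_of_lt hp0)]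
    refine max_lt (lt_min ?_ ?_) (lt_min ?_ ?_)
    · exact mul_pos hp0 hb2c1
    · exact mul_pos hp0 hb2c2
    · have h' : 2*(p+1)*p*q - n*(p*q-1)*p < -(2*σ*(p*q-1)*p*q) := by
        linarith [mul_lt_mul_of_pos_left hK1 hp0]
      have h'' : -(2*σ*(p*q-1)*p*q) ≤ p * (-(2*γ*(p*q-1)*p*q)) := by
        linarith [mul_lt_mul_of_pos_right hpγ (mul_pos (mul_pos hA hp0) hq0)]
      linarith
    · linarith [mul_lt_mul_of_pos_left hL1 hp0]
  have ha2qb1 : a2 < q * b1 := by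
    rw [ha2, hb1, mul_min_of_nonneg _ _ (le_of_lt hq0)]
    refine max_lt (lt_min ?_ ?_) (lt_min ?_ ?_)
    · exact mul_pos hq0 hb1c1
    · exact mul_pos hq0 hb1c2
    · have h' : 2*(q+1)*p*q - n*(p*q-1)*q < -(2*γ*(p*q-1)*p*q) := by
        linarith [mul_lt_mul_of_pos_left hK2 hq0]
      have h'' : -(2*γ*(p*q-1)*p*q) ≤ q * (-(2*σ*(p*q-1)*p*q)) := by
        linarith [mul_lt_mul_of_pos_right hqσ (mul_pos (mul_pos hA hp0) hq0)]
      linarith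
    · linarith [mul_lt_mul_of_pos_left hL2 hq0]
  have ha1nn : 0 ≤ a1 := by rw [ha1]; exact le_max_left _ _
  have ha2nn : 0 ≤ a2 := by rw [ha2]; exact le_max_left _ _
  -- δ (numerator over D)
  set dl := (max a2 (a1/p) + min b2 (q*b1))/2 with hdl
  clear_value dl
  have hlu2 : max a2 (a1/p) < min b2 (q*b1) := by
    refine max_lt (lt_min ha2b2 ha2qb1) (lt_min ?_ ?_)
    · rw [div_lt_iff₀ hp0]; nlinarith [ha1pb2]
    · rw [div_lt_iff₀ hp0]
      have hb1' : b1 ≤ p*q*b1 := by nlinarith [mul_pos hb1pos hA]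
      nlinarith [ha1b1]
  have hdl_lo : max a2 (a1/p) < dl := by rw [hdl]; linarith
  have hdl_hi : dl < min b2 (q*b1) := by rw [hdl]; linarith
  have ha2dl : a2 < dl := lt_of_le_of_lt (le_max_left _ _) hdl_lo
  have ha1pdl : a1/p < dl := lt_of_le_of_lt (le_max_right _ _) hdl_lo
  have hdlb2 : dl < b2 := lt_of_lt_of_le hdl_hi (min_le_left _ _)
  have hdlqb1 : dl < q*b1 := lt_of_lt_of_le hdl_hi (min_le_right _ _)
  have hdl0 : 0 < dl := lt_of_le_of_lt ha2nn ha2dl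
  -- ε (numerator over D)
  set ep := (max a1 (dl/q) + min b1 (p*dl))/2 with hep
  clear_value ep
  have hlu1 : max a1 (dl/q) < min b1 (p*dl) := by
    refine max_lt (lt_min ha1b1 ?_) (lt_min ?_ ?_)
    · have := (div_lt_iff₀ hp0).mp ha1pdl
      linarith
    · rw [div_lt_iff₀ hq0]; linarith [hdlqb1]
    · rw [div_lt_iff₀ hq0]
      have := mul_pos hdl0 hA
      nlinarith
  have hep_lo : max a1 (dl/q) < ep := by rw [hep]; linarith
  have hep_hi : ep < min b1 (p*dl) := by rw [hep]; linarith
  have ha1ep : a1 < ep := lt_of_le_of_lt (le_max_left _ _) hep_lo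
  have hdlqep : dl/q < ep := lt_of_le_of_lt (le_max_right _ _) hep_lo
  have hepb1 : ep < b1 := lt_of_lt_of_le hep_hi (min_le_left _ _)
  have heppdl : ep < p*dl := lt_of_lt_of_le hep_hi (min_le_right _ _)
  have hep0 : 0 < ep := lt_of_le_of_lt ha1nn ha1ep
  have hdlqep' : dl < q*ep := by
    have := (div_lt_iff₀ hq0).mp hdlqep
    linarith
  -- bound consequences
  have hepb1a : ep < -(2*σ*(p*q-1)*p*q) :=
    lt_of_lt_of_le hepb1 (by rw [hb1]; exact min_le_left _ _)
  have hepb1b : ep < 2*(p+1)*p*q - 2*(q+1)*p :=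
    lt_of_lt_of_le hepb1 (by rw [hb1]; exact min_le_right _ _)
  have hdlb2a : dl < -(2*γ*(p*q-1)*p*q) :=
    lt_of_lt_of_le hdlb2 (by rw [hb2]; exact min_le_left _ _)
  have hdlb2b : dl < 2*(q+1)*p*q - 2*(p+1)*q :=
    lt_of_lt_of_le hdlb2 (by rw [hb2]; exact min_le_right _ _)
  have ha1ep' : 2*(p+1)*p*q - n*(p*q-1)*p < ep :=
    lt_of_le_of_lt (by rw [ha1]; exact le_max_right _ _) ha1ep
  have ha2dl' : 2*(q+1)*p*q - n*(p*q-1)*q < dl :=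
    lt_of_le_of_lt (by rw [ha2]; exact le_max_right _ _) ha2dl
  -- the exponents
  have hnumx : 0 < 2*(p+1)*p*q - ep := by
    have := mul_pos hq0 hp0
    linarith [hepb1b]
  have hnumy : 0 < 2*(q+1)*p*q - dl := by
    have := mul_pos hp0 hq0
    linarith [hdlb2b]
  refine ⟨D/(2*(p+1)*p*q - ep), D/(2*(q+1)*p*q - dl), div_pos hD hnumx, div_pos hD hnumy,
    ⟨?_, ?_⟩, ⟨?_, ?_⟩, ?_, ?_⟩
  · have E1 : 1/(q*(n*(p*q-1)/(2*(q+1)))) = 2*(q+1)*p/D := by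
      rw [hDdef]; field_simp; try ring
    have E2 : 1/(n*(p*q-1)/(2*((p*q-1)*(1+σ)+p+1))) - 2/n
        = (2*(p+1)*p*q + 2*σ*(p*q-1)*p*q)/D := by
      rw [one_div_div, hDdef]; field_simp; try ring
    rw [E1, E2, one_div_div]
    refine max_lt ((div_lt_div_iff_of_pos_right hD).mpr ?_) ((div_lt_div_iff_of_pos_right hD).mpr ?_)
    · linarith [hepb1b]
    · linarith [hepb1a]
  · rw [one_div_div]
    have E3 : 1/(n*(p*q-1)/(2*(p+1))) = 2*(p+1)*p*q/D := by
      rw [one_div_div, hDdef]; field_simp; try ring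
    have E4 : 1/q = n*(p*q-1)*p/D := by
      rw [eq_div_iff (ne_of_gt hD), hDdef, one_div, inv_mul_eq_div, div_eq_iff hqne]
    rw [E3, E4]
    exact lt_min ((div_lt_div_iff_of_pos_right hD).mpr (by linarith [hep0]))
      ((div_lt_div_iff_of_pos_right hD).mpr (by linarith [ha1ep']))
  · have E1 : 1/(p*(n*(p*q-1)/(2*(p+1)))) = 2*(p+1)*q/D := by
      rw [hDdef]; field_simp; try ring
    have E2 : 1/(n*(p*q-1)/(2*((p*q-1)*(1+γ)+q+1))) - 2/n
        = (2*(q+1)*p*q + 2*γ*(p*q-1)*p*q)/D := by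
      rw [one_div_div, hDdef]; field_simp; try ring
    rw [E1, E2, one_div_div]
    refine max_lt ((div_lt_div_iff_of_pos_right hD).mpr ?_) ((div_lt_div_iff_of_pos_right hD).mpr ?_)
    · linarith [hdlb2b]
    · linarith [hdlb2a]
  · rw [one_div_div]
    have E3 : 1/(n*(p*q-1)/(2*(q+1))) = 2*(q+1)*p*q/D := by
      rw [one_div_div, hDdef]; field_simp; try ring
    have E4 : 1/p = n*(p*q-1)*q/D := by
      rw [hDdef]; field_simp; try ring
    rw [E3, E4]
    exact lt_min ((div_lt_div_iff_of_pos_right hD).mpr (by linarith [hdl0]))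
      ((div_lt_div_iff_of_pos_right hD).mpr (by linarith [ha2dl']))
  · rw [div_div_eq_mul_div, one_div_div, div_sub_div_same]
    have E5 : 2/n = 2*(p*q-1)*p*q/D := by
      rw [hDdef]; field_simp; try ring
    rw [E5]
    refine (div_lt_div_iff_of_pos_right hD).mpr ?_
    linarith only [heppdl]
  · rw [div_div_eq_mul_div, one_div_div, div_sub_div_same]
    have E5 : 2/n = 2*(p*q-1)*p*q/D := by
      rw [hDdef]; field_simp; try ring
    rw [E5]
    refine (div_lt_div_iff_of_pos_right hD).mpr ?_
    linarith only [hdlqep']
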